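/- For all t ∈ [4, 16], the expression −(2(t²+1)·log t + t(log 4 − t(4 + log 8)) + 4 − log 8) / (t² − 1) is nonnegative and decreasing in t. -/

import Mathlib

lemma log4eq : Real.log 4 = 2 * Real.log 2 := by
  rw [show (4:ℝ) = 2^2 by norm_num, Real.log_pow]; push_cast; ring

lemma log8eq : Real.log 8 = 3 * Real.log 2 := by
  rw [show (8:ℝ) = 2^3 by norm_num, Real.log_pow]; push_cast; ring

lemma hasD {t : ℝ} (ht : 0 < t) (h1 : t ^ 2 - 1 ≠ 0) :
    HasDerivAt (fun t : ℝ =>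
      -(2 * (t ^ 2 + 1) * Real.log t + t * (Real.log 4 - t * (4 + Real.log 8))
          + 4 - Real.log 8) / (t ^ 2 - 1))
      ((-(4 * t * Real.log t + 2 * (t ^ 2 + 1) / t + Real.log 4 - 2 * t * (4 + Real.log 8))
          * (t ^ 2 - 1)
        - -(2 * (t ^ 2 + 1) * Real.log t + t * (Real.log 4 - t * (4 + Real.log 8))
            + 4 - Real.log 8) * (2 * t)) / ((t ^ 2 - 1) ^ 2)) t := by
  have hA : HasDerivAt (fun x : ℝ => 2 * (x ^ 2 + 1) * Real.log x)
      (4 * t * Real.log t + 2 * (t ^ 2 + 1) / t) t := by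
    have h := (((hasDerivAt_pow 2 t).add_const 1).const_mul 2).mul
      (Real.hasDerivAt_log ht.ne')
    refine h.congr_deriv ?_
    push_cast
    rw [div_eq_mul_inv]
    ring
  have hB : HasDerivAt (fun x : ℝ => x * (Real.log 4 - x * (4 + Real.log 8)))
      ((Real.log 4 - t * (4 + Real.log 8)) + t * (-(4 + Real.log 8))) t := by
    have h := (hasDerivAt_id t).mul
      (((hasDerivAt_id t).mul_const (4 + Real.log 8)).const_sub (Real.log 4))
    refine h.congr_deriv ?_
    simp
  have hden : HasDerivAt (fun x : ℝ => x ^ 2 - 1) (2 * t) t := by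
    have := (hasDerivAt_pow 2 t).sub_const 1
    refine this.congr_deriv ?_; push_cast; ring
  have hnum := (((hA.add hB).add_const 4).sub_const (Real.log 8)).neg
  have h := hnum.div hden h1
  refine h.congr_deriv ?_
  simp only [Pi.neg_apply, Pi.add_apply]
  ring

lemma derivNonpos {t : ℝ} (h4 : 4 ≤ t) (h16 : t ≤ 16) :
    (-(4 * t * Real.log t + 2 * (t ^ 2 + 1) / t + Real.log 4 - 2 * t * (4 + Real.log 8))
          * (t ^ 2 - 1)
        - -(2 * (t ^ 2 + 1) * Real.log t + t * (Real.log 4 - t * (4 + Real.log 8))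
            + 4 - Real.log 8) * (2 * t)) / ((t ^ 2 - 1) ^ 2) ≤ 0 := by
  have ht : (0:ℝ) < t := by linarith
  apply div_nonpos_of_nonpos_of_nonneg _ (by positivity)
  have hQ : (-(4 * t * Real.log t + 2 * (t ^ 2 + 1) / t + Real.log 4 - 2 * t * (4 + Real.log 8))
          * (t ^ 2 - 1)
        - -(2 * (t ^ 2 + 1) * Real.log t + t * (Real.log 4 - t * (4 + Real.log 8))
            + 4 - Real.log 8) * (2 * t))
      = (2 * Real.log 2 * (t ^ 3 - 6 * t ^ 2 + t) + 8 * t ^ 2 * Real.log t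
          - 2 * t ^ 4 + 2) / t := by
    rw [log4eq, log8eq]
    field_simp
    ring
  rw [hQ]
  apply div_nonpos_of_nonpos_of_nonneg _ ht.le
  have hl2u : Real.log 2 < 0.6931471808 := Real.log_two_lt_d9
  have hl2l : (0.6931471803:ℝ) < Real.log 2 := Real.log_two_gt_d9
  have hlt : Real.log t ≤ t / 2 + Real.log 2 - 1 := by
    have h := Real.log_le_sub_one_of_pos (show (0:ℝ) < t / 2 by linarith)
    rw [Real.log_div (by linarith) two_ne_zero] at h
    linarith
  nlinarith [sq_nonneg (t - 4), sq_nonneg (t - 16), mul_pos ht ht,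
    mul_nonneg (mul_nonneg ht.le ht.le) ht.le, sq_nonneg t,
    mul_nonneg (sq_nonneg t) (sub_nonneg.mpr h4),
    mul_nonneg (mul_nonneg (sq_nonneg t) (sub_nonneg.mpr h4)) (sub_nonneg.mpr h4)]

theorem stmt_9 :
    (∀ t ∈ Set.Icc (4 : ℝ) 16,
      0 ≤ -(2 * (t ^ 2 + 1) * Real.log t + t * (Real.log 4 - t * (4 + Real.log 8))
            + 4 - Real.log 8) / (t ^ 2 - 1)) ∧
    AntitoneOn (fun t : ℝ =>
      -(2 * (t ^ 2 + 1) * Real.log t + t * (Real.log 4 - t * (4 + Real.log 8))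
          + 4 - Real.log 8) / (t ^ 2 - 1)) (Set.Icc (4 : ℝ) 16) := by
  have hpos : ∀ t ∈ Set.Icc (4:ℝ) 16, (0:ℝ) < t ∧ t ^ 2 - 1 ≠ 0 := by
    rintro t ⟨h4, h16⟩
    constructor
    · linarith
    · nlinarith
  have hanti : AntitoneOn (fun t : ℝ =>
      -(2 * (t ^ 2 + 1) * Real.log t + t * (Real.log 4 - t * (4 + Real.log 8))
          + 4 - Real.log 8) / (t ^ 2 - 1)) (Set.Icc (4 : ℝ) 16) := by
    apply antitoneOn_of_deriv_nonpos (convex_Icc 4 16)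
    · intro x hx
      obtain ⟨hx0, hx1⟩ := hpos x hx
      exact (hasD hx0 hx1).continuousAt.continuousWithinAt
    · intro x hx
      rw [interior_Icc] at hx
      obtain ⟨hx0, hx1⟩ := hpos x ⟨hx.1.le, hx.2.le⟩
      exact (hasD hx0 hx1).differentiableAt.differentiableWithinAt
    · intro x hx
      rw [interior_Icc] at hx
      obtain ⟨hx0, hx1⟩ := hpos x ⟨hx.1.le, hx.2.le⟩
      rw [(hasD hx0 hx1).deriv]
      exact derivNonpos hx.1.le hx.2.le
  refine ⟨?_, hanti⟩
  intro t ht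
  have h16 : (0:ℝ) ≤ -(2 * ((16:ℝ) ^ 2 + 1) * Real.log 16 + 16 * (Real.log 4 - 16 * (4 + Real.log 8))
            + 4 - Real.log 8) / ((16:ℝ) ^ 2 - 1) := by
    have h16eq : Real.log 16 = 4 * Real.log 2 := by
      rw [show (16:ℝ) = 2^4 by norm_num, Real.log_pow]; push_cast; ring
    rw [h16eq, log4eq, log8eq]
    have hl2u : Real.log 2 < 0.6931471808 := Real.log_two_lt_d9
    apply div_nonneg _ (by norm_num)
    nlinarith
  have := hanti ht (by constructor <;> norm_num) ht.2
  linarith
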